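/- For a ∈ (0,1) and mu ∈ (0,1), define C̄(a,mu) := 4·sup_{r>0} ( ∫_r^∞ Y^{-a}·(mu·Y + Y²/2)^{-2} dY )·( ∫_0^r Y^{a}·(Y + Y²/2) dY ). Then there exist universal constants ā > 0 and mu0 ∈ (0,1) such that for all a ∈ (0,ā) and all mu ∈ (mu0,1): C̄(a,mu) ≤ 9/10. -/

import Mathlib

open Set MeasureTheory Filter
open scoped Topology

/-- The constant `C̄(a,μ) = 4·sup_{r>0}(∫_r^∞ Y^{-a}(μY+Y²/2)^{-2} dY)(∫_0^r Y^a(Y+Y²/2) dY)`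
of the weighted Hardy inequality is at most `9/10` for `a` small and `μ` close to `1`. -/
theorem hardy_constant_small :
    ∃ abar : ℝ, 0 < abar ∧ ∃ mu0 : ℝ, mu0 ∈ Ioo (0:ℝ) 1 ∧
      ∀ a ∈ Ioo (0:ℝ) abar, ∀ mu ∈ Ioo mu0 (1:ℝ), ∀ r : ℝ, 0 < r →
        4 * ((∫ Y in Ioi r, Y ^ (-a) * ((mu * Y + Y ^ 2 / 2) ^ 2)⁻¹)
            * ∫ Y in Ioo (0:ℝ) r, Y ^ a * (Y + Y ^ 2 / 2)) ≤ 9 / 10 := by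
  refine ⟨1, one_pos, 199/200, ⟨by norm_num, by norm_num⟩, ?_⟩
  rintro a ⟨ha0, ha1⟩ mu ⟨hmu0, hmu1⟩ r hr
  set F' : ℝ → ℝ := fun Y => (4/3) * (3*Y^2 + 6*Y) / ((Y^3 + 3*Y^2)^2) with hF'
  set f : ℝ → ℝ := fun Y => -(4/3) * (Y^3 + 3*Y^2)⁻¹ with hf
  -- derivative facts
  have hpoly : ∀ x : ℝ, 0 < x → HasDerivAt (fun Y : ℝ => Y^3 + 3*Y^2) (3*x^2 + 6*x) x := by
    intro x _
    have h1 : HasDerivAt (fun Y : ℝ => Y^3) (3*x^2) x := by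
      simpa using hasDerivAt_pow 3 x
    have h2 : HasDerivAt (fun Y : ℝ => 3*Y^2) (3*(2*x)) x := by
      simpa using (hasDerivAt_pow 2 x).const_mul 3
    exact (h1.add h2).congr_deriv (by ring)
  have hpne : ∀ x : ℝ, 0 < x → x^3 + 3*x^2 ≠ 0 := by
    intro x hx; positivity
  have hderiv : ∀ x ∈ Ioi r, HasDerivAt f (F' x) x := by
    intro x hx
    have hx0 : 0 < x := hr.trans hx
    have := ((hpoly x hx0).inv (hpne x hx0)).const_mul (-(4/3) : ℝ)
    exact this.congr_deriv (by show _ = (4/3) * (3*x^2 + 6*x) / ((x^3 + 3*x^2)^2); ring)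
  have hcont : ContinuousWithinAt f (Ici r) r := by
    have hc : ContinuousAt (fun Y : ℝ => Y^3 + 3*Y^2) r := by fun_prop
    exact (continuousAt_const.mul (hc.inv₀ (hpne r hr))).continuousWithinAt
  have htop : Tendsto (fun Y : ℝ => Y^3 + 3*Y^2) atTop atTop := by
    apply tendsto_atTop_mono' _ _ (tendsto_pow_atTop (n := 3) (by norm_num))
    filter_upwards [eventually_ge_atTop (0:ℝ)] with x hx
    nlinarith
  have htend : Tendsto f atTop (𝓝 0) := by
    have := (htop.inv_tendsto_atTop).const_mul (-(4/3) : ℝ)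
    simpa [hf] using this
  have hF'nonneg : ∀ x ∈ Ioi r, 0 ≤ F' x := by
    intro x hx
    have hx0 : 0 < x := hr.trans hx
    have : (0:ℝ) ≤ 3*x^2 + 6*x := by nlinarith
    positivity
  have hF'int : IntegrableOn F' (Ioi r) :=
    integrableOn_Ioi_deriv_of_nonneg hcont hderiv hF'nonneg htend
  have hF'val : ∫ x in Ioi r, F' x = (4/3) * (r^3 + 3*r^2)⁻¹ := by
    rw [integral_Ioi_of_hasDerivAt_of_nonneg hcont hderiv hF'nonneg htend]
    simp [hf]
  -- bound the first integral
  have hmu0' : (199:ℝ)/200 < mu := hmu0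
  have hI1 : (∫ Y in Ioi r, Y ^ (-a) * ((mu * Y + Y ^ 2 / 2) ^ 2)⁻¹)
      ≤ r ^ (-a) * ((200/199)^2 * ((4/3) * (r^3 + 3*r^2)⁻¹)) := by
    have hle : ∀ Y ∈ Ioi r, Y ^ (-a) * ((mu * Y + Y ^ 2 / 2) ^ 2)⁻¹
        ≤ r ^ (-a) * ((200/199)^2 * F' Y) := by
      intro Y hY
      have hY0 : 0 < Y := hr.trans hY
      have h1 : Y ^ (-a) ≤ r ^ (-a) :=
        Real.rpow_le_rpow_of_nonpos hr (le_of_lt hY) (by linarith)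
      have h199 : (199:ℝ)/200 * (Y + Y^2/2) ≤ mu * Y + Y^2/2 := by nlinarith
      have hp1 : (0:ℝ) < 199/200 * (Y + Y^2/2) := by nlinarith
      have hA1 : ((mu * Y + Y ^ 2 / 2) ^ 2)⁻¹ ≤ (((199:ℝ)/200 * (Y + Y^2/2))^2)⁻¹ := by
        apply inv_anti₀ (by positivity)
        exact pow_le_pow_left₀ (le_of_lt hp1) h199 2
      have hA3 : (((199:ℝ)/200 * (Y + Y^2/2))^2)⁻¹ ≤ (200/199)^2 * F' Y := by
        have hkey : (Y^3 + 3*Y^2)^2 ≤ ((200/199)^2 * ((4/3) * (3*Y^2 + 6*Y)))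
            * (((199:ℝ)/200 * (Y + Y^2/2))^2) := by nlinarith [pow_pos hY0 3, pow_pos hY0 4, sq_nonneg Y]
        have h2 : (200/199:ℝ)^2 * F' Y
            = ((200/199)^2 * ((4/3) * (3*Y^2 + 6*Y))) / ((Y^3 + 3*Y^2)^2) := by
          simp [hF']; ring
        rw [h2, inv_eq_one_div, div_le_div_iff₀ (by positivity) (by positivity)]
        linarith
      have h2 := hA1.trans hA3
      exact mul_le_mul h1 h2 (by positivity) (by positivity)
    have hnn : 0 ≤ᵐ[volume.restrict (Ioi r)]
        fun Y => Y ^ (-a) * ((mu * Y + Y ^ 2 / 2) ^ 2)⁻¹ := by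
      filter_upwards [ae_restrict_mem measurableSet_Ioi] with Y hY
      have hY0 : 0 < Y := hr.trans hY
      have hmuY : 0 < mu * Y + Y^2/2 := by nlinarith
      positivity
    have hgi : Integrable (fun Y => r ^ (-a) * ((200/199)^2 * F' Y))
        (volume.restrict (Ioi r)) := by
      exact ((hF'int.const_mul _).const_mul _)
    have := integral_mono_of_nonneg hnn hgi
      (by filter_upwards [ae_restrict_mem measurableSet_Ioi] with Y hY using hle Y hY)
    rw [integral_const_mul, integral_const_mul, hF'val] at this
    exact this
  -- bound the second integral
  have hI2 : (∫ Y in Ioo (0:ℝ) r, Y ^ a * (Y + Y ^ 2 / 2)) ≤ r ^ a * (r^2/2 + r^3/6) := by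
    have hgi : Integrable (fun Y : ℝ => r ^ a * (Y + Y ^ 2 / 2))
        (volume.restrict (Ioo 0 r)) := by
      exact ((by fun_prop : Continuous fun Y : ℝ => r ^ a * (Y + Y ^ 2 / 2)).integrableOn_Icc).mono_set Ioo_subset_Icc_self
    have hnn : 0 ≤ᵐ[volume.restrict (Ioo (0:ℝ) r)]
        fun Y => Y ^ a * (Y + Y ^ 2 / 2) := by
      filter_upwards [ae_restrict_mem measurableSet_Ioo] with Y hY
      have hY0 : 0 < Y := hY.1
      positivity
    have hle : (∫ Y in Ioo (0:ℝ) r, Y ^ a * (Y + Y ^ 2 / 2))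
        ≤ ∫ Y in Ioo (0:ℝ) r, r ^ a * (Y + Y ^ 2 / 2) := by
      apply integral_mono_of_nonneg hnn hgi
      filter_upwards [ae_restrict_mem measurableSet_Ioo] with Y hY
      have hY0 : 0 < Y := hY.1
      have h1 : Y ^ a ≤ r ^ a := Real.rpow_le_rpow (le_of_lt hY0) (le_of_lt hY.2) (le_of_lt ha0)
      have h2 : (0:ℝ) ≤ Y + Y^2/2 := by positivity
      exact mul_le_mul_of_nonneg_right h1 h2
    have hval : (∫ Y in Ioo (0:ℝ) r, r ^ a * (Y + Y ^ 2 / 2)) = r ^ a * (r^2/2 + r^3/6) := by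
      rw [← integral_Ioc_eq_integral_Ioo, ← intervalIntegral.integral_of_le (le_of_lt hr)]
      rw [intervalIntegral.integral_const_mul]
      have : (∫ Y in (0:ℝ)..r, (Y + Y^2/2)) = r^2/2 + r^3/6 := by
        have h1 : IntervalIntegrable (fun Y : ℝ => Y) volume 0 r := by
          apply Continuous.intervalIntegrable; fun_prop
        have h2 : IntervalIntegrable (fun Y : ℝ => Y^2/2) volume 0 r := by
          apply Continuous.intervalIntegrable; fun_prop
        rw [intervalIntegral.integral_add h1 h2, intervalIntegral.integral_div]
        norm_num [integral_id, integral_pow]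
        ring
      rw [this]
    rw [hval] at hle
    exact hle
  -- nonnegativity of the integrals
  have hI1nn : 0 ≤ ∫ Y in Ioi r, Y ^ (-a) * ((mu * Y + Y ^ 2 / 2) ^ 2)⁻¹ := by
    apply setIntegral_nonneg measurableSet_Ioi
    intro Y hY
    have hY0 : 0 < Y := hr.trans hY
    have hmuY : 0 < mu * Y + Y^2/2 := by nlinarith
    positivity
  have hI2nn : 0 ≤ ∫ Y in Ioo (0:ℝ) r, Y ^ a * (Y + Y ^ 2 / 2) := by
    apply setIntegral_nonneg measurableSet_Ioo
    intro Y hY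
    have hY0 : 0 < Y := hY.1
    positivity
  -- combine
  have hB1nn : (0:ℝ) ≤ r ^ (-a) * ((200/199)^2 * ((4/3) * (r^3 + 3*r^2)⁻¹)) := by positivity
  have hprod : (∫ Y in Ioi r, Y ^ (-a) * ((mu * Y + Y ^ 2 / 2) ^ 2)⁻¹)
      * (∫ Y in Ioo (0:ℝ) r, Y ^ a * (Y + Y ^ 2 / 2))
      ≤ (r ^ (-a) * ((200/199)^2 * ((4/3) * (r^3 + 3*r^2)⁻¹))) * (r ^ a * (r^2/2 + r^3/6)) :=
    mul_le_mul hI1 hI2 hI2nn hB1nn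
  have hra : r ^ (-a) * r ^ a = 1 := by
    rw [← Real.rpow_add hr]; simp
  have hfinal : (r ^ (-a) * ((200/199)^2 * ((4/3) * (r^3 + 3*r^2)⁻¹))) * (r ^ a * (r^2/2 + r^3/6))
      = (200/199)^2 * (4/3) * (1/6) := by
    have hp : (0:ℝ) < r^3 + 3*r^2 := by positivity
    have h6 : (r^2/2 + r^3/6) = (r^3 + 3*r^2)/6 := by ring
    have hc : (r^3 + 3*r^2)⁻¹ * ((r^3 + 3*r^2)/6) = 1/6 := by
      field_simp
    calc (r ^ (-a) * ((200/199)^2 * ((4/3) * (r^3 + 3*r^2)⁻¹))) * (r ^ a * (r^2/2 + r^3/6))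
        = (r ^ (-a) * r ^ a) * ((200/199)^2 * (4/3)) * ((r^3 + 3*r^2)⁻¹ * ((r^3 + 3*r^2)/6)) := by
          rw [h6]; ring
      _ = (200/199)^2 * (4/3) * (1/6) := by rw [hra, hc]; ring
  calc 4 * ((∫ Y in Ioi r, Y ^ (-a) * ((mu * Y + Y ^ 2 / 2) ^ 2)⁻¹)
            * ∫ Y in Ioo (0:ℝ) r, Y ^ a * (Y + Y ^ 2 / 2))
      ≤ 4 * ((r ^ (-a) * ((200/199)^2 * ((4/3) * (r^3 + 3*r^2)⁻¹))) * (r ^ a * (r^2/2 + r^3/6))) := by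
        linarith
    _ = 4 * ((200/199)^2 * (4/3) * (1/6)) := by rw [hfinal]
    _ ≤ 9/10 := by norm_num
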